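/- If A₀, A₁, … are nonempty compact subsets of ℝ whose infinite Minkowski sum Σᵢ Aᵢ exists in the Hausdorff metric, then diam(Aᵢ) → 0 as i → ∞. -/
import Mathlib

open Pointwise

open Metric Bornology in
lemma sSup_le_sSup_add_hd {X Y : Set ℝ} (hX : X.Nonempty) (hY : Y.Nonempty)
    (hXb : IsBounded X) (hYb : IsBounded Y) (hYc : IsCompact Y) :
    sSup X ≤ sSup Y + hausdorffDist X Y := by
  have hfin : EMetric.hausdorffEdist X Y ≠ ⊤ :=
    hausdorffEdist_ne_top_of_nonempty_of_bounded hX hY hXb hYb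
  refine csSup_le hX fun x hx => ?_
  have h1 : infDist x Y ≤ hausdorffDist X Y :=
    infDist_le_hausdorffDist_of_mem hx hfin
  obtain ⟨y, hy, hdy⟩ := hYc.exists_infDist_eq_dist hY x
  have hysup : y ≤ sSup Y := le_csSup hYb.bddAbove hy
  have h2 : x - sSup Y ≤ infDist x Y := by
    rw [hdy, Real.dist_eq]
    calc x - sSup Y ≤ x - y := by linarith
      _ ≤ |x - y| := le_abs_self _
  linarith

open Metric Bornology in
lemma sInf_le_sInf_add_hd {X Y : Set ℝ} (hX : X.Nonempty) (hY : Y.Nonempty)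
    (hXb : IsBounded X) (hYb : IsBounded Y) (hYc : IsCompact Y) :
    sInf Y ≤ sInf X + hausdorffDist X Y := by
  have hfin : EMetric.hausdorffEdist X Y ≠ ⊤ :=
    hausdorffEdist_ne_top_of_nonempty_of_bounded hX hY hXb hYb
  have : ∀ x ∈ X, sInf Y ≤ x + hausdorffDist X Y := by
    intro x hx
    have h1 : infDist x Y ≤ hausdorffDist X Y :=
      infDist_le_hausdorffDist_of_mem hx hfin
    obtain ⟨y, hy, hdy⟩ := hYc.exists_infDist_eq_dist hY x
    have hyinf : sInf Y ≤ y := csInf_le hYb.bddBelow hy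
    have h2 : sInf Y - x ≤ infDist x Y := by
      rw [hdy, Real.dist_eq]
      calc sInf Y - x ≤ y - x := by linarith
        _ ≤ |x - y| := by rw [abs_sub_comm]; exact le_abs_self _
    linarith
  have hlb : sInf Y - hausdorffDist X Y ≤ sInf X :=
    le_csInf hX fun x hx => by linarith [this x hx]
  linarith

open Metric Bornology in
lemma diam_le_two_hd {B C : Set ℝ} (hB : B.Nonempty) (hC : C.Nonempty)
    (hBb : IsBounded B) (hCb : IsBounded C) (hBc : IsCompact B) :
    diam C ≤ 2 * hausdorffDist B (B + C) := by
  have hBCne : (B + C).Nonempty := hB.add hC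
  have hBCb : IsBounded (B + C) := hBb.add hCb
  have hsup : sSup (B + C) = sSup B + sSup C :=
    csSup_add hB hBb.bddAbove hC hCb.bddAbove
  have hinf : sInf (B + C) = sInf B + sInf C :=
    csInf_add hB hBb.bddBelow hC hCb.bddBelow
  have h1 : sSup (B + C) ≤ sSup B + hausdorffDist (B + C) B :=
    sSup_le_sSup_add_hd hBCne hB hBCb hBb hBc
  have h2 : sInf B ≤ sInf (B + C) + hausdorffDist (B + C) B :=
    sInf_le_sInf_add_hd hBCne hB hBCb hBb hBc
  have hsym : hausdorffDist (B + C) B = hausdorffDist B (B + C) :=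
    hausdorffDist_comm (s := B + C) (t := B)
  have hdiam : diam C ≤ sSup C - sInf C := by
    apply diam_le_of_forall_dist_le (by
      obtain ⟨c, hc⟩ := hC
      linarith [le_csSup hCb.bddAbove hc, csInf_le hCb.bddBelow hc])
    intro x hx y hy
    rw [Real.dist_eq, abs_sub_le_iff]
    constructor <;>
      linarith [le_csSup hCb.bddAbove hx, le_csSup hCb.bddAbove hy,
        csInf_le hCb.bddBelow hx, csInf_le hCb.bddBelow hy]
  rw [hsym] at h1 h2
  linarith [hsup, hinf]

theorem diam_tendsto_zero_of_minkowski_tsum (A : ℕ → Set ℝ)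
    (hcomp : ∀ i, IsCompact (A i)) (hne : ∀ i, (A i).Nonempty)
    (S : Set ℝ) (hS : IsCompact S) (hSne : S.Nonempty)
    (hlim : Filter.Tendsto
      (fun n => Metric.hausdorffDist (∑ i ∈ Finset.range (n + 1), A i) S)
      Filter.atTop (nhds 0)) :
    Filter.Tendsto (fun i => Metric.diam (A i)) Filter.atTop (nhds 0) := by
  set P : ℕ → Set ℝ := fun n => ∑ i ∈ Finset.range (n + 1), A i with hP
  have hPcomp : ∀ n, IsCompact (P n) := by
    intro n
    induction n with
    | zero => simpa [P] using hcomp 0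
    | succ k ih =>
      have : P (k + 1) = P k + A (k + 1) := by
        simp [P, Finset.sum_range_succ]
      rw [this]; exact ih.add (hcomp (k + 1))
  have hPne : ∀ n, (P n).Nonempty := by
    intro n
    induction n with
    | zero => simpa [P] using hne 0
    | succ k ih =>
      have : P (k + 1) = P k + A (k + 1) := by
        simp [P, Finset.sum_range_succ]
      rw [this]; exact ih.add (hne (k + 1))
  have key : ∀ n, Metric.diam (A (n + 1)) ≤
      2 * (Metric.hausdorffDist (P n) S + Metric.hausdorffDist (P (n + 1)) S) := by
    intro n
    have hsucc : P (n + 1) = P n + A (n + 1) := by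
      simp [P, Finset.sum_range_succ]
    have h1 : Metric.diam (A (n + 1)) ≤ 2 * Metric.hausdorffDist (P n) (P (n + 1)) := by
      rw [hsucc]
      exact diam_le_two_hd (hPne n) (hne (n + 1)) (hPcomp n).isBounded
        (hcomp (n + 1)).isBounded (hPcomp n)
    have htri : Metric.hausdorffDist (P n) (P (n + 1)) ≤
        Metric.hausdorffDist (P n) S + Metric.hausdorffDist S (P (n + 1)) := by
      apply Metric.hausdorffDist_triangle
      exact Metric.hausdorffEdist_ne_top_of_nonempty_of_bounded (hPne n) hSne
        (hPcomp n).isBounded hS.isBounded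
    rw [Metric.hausdorffDist_comm (s := S) (t := P (n + 1))] at htri
    linarith
  have hshift : Filter.Tendsto (fun n => Metric.diam (A (n + 1))) Filter.atTop (nhds 0) := by
    have hupper : Filter.Tendsto
        (fun n => 2 * (Metric.hausdorffDist (P n) S + Metric.hausdorffDist (P (n + 1)) S))
        Filter.atTop (nhds 0) := by
      have h2 : Filter.Tendsto (fun n => Metric.hausdorffDist (P (n + 1)) S)
          Filter.atTop (nhds 0) := hlim.comp (Filter.tendsto_add_atTop_nat 1)
      have := (hlim.add h2).const_mul 2
      simpa using this
    refine squeeze_zero (fun n => Metric.diam_nonneg) key hupper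
  exact (Filter.tendsto_add_atTop_iff_nat 1).mp hshift
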